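/- arXiv:0908.0916 — 5 statements merged into one kernel-verified Lean document; each statement's English description precedes it below -/
import Mathlib

section
/- For q ∈ k^× not a root of unity and n = 1 (the case 𝔤 = 𝔰𝔩₂), the half quantum group 𝒰^{≥0}, generated by E, K, K⁻¹ with relations KK⁻¹ = K⁻¹K = 1 and KEK⁻¹ = q²E, is not quasi-cocommutative: there is no invertible R ∈ 𝒰^{≥0} ⊗ 𝒰^{≥0} with Δ^op(h) = RΔ(h)R⁻¹ for all h. -/
open TensorProduct

lemma repr_shift_apply {k M ι : Type*} [Field k] [AddCommGroup M] [Module k M]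
    (T : Module.Basis ι k M) (f : M →ₗ[k] M) (σ : ι → ι) (hσ : Function.Injective σ)
    (a : ι → k) (hf : ∀ p, f (T p) = a p • T (σ p)) (x : M) (p : ι) :
    T.repr (f x) (σ p) = a p * T.repr x p := by
  have h : (Finsupp.lapply (σ p)).comp (T.repr.toLinearMap.comp f)
      = a p • (Finsupp.lapply p).comp (T.repr.toLinearMap : M →ₗ[k] (ι →₀ k)) := by
    apply T.ext
    intro i
    simp only [LinearMap.comp_apply, LinearMap.smul_apply, LinearEquiv.coe_coe, hf i,
      map_smul, Finsupp.lapply_apply, Finsupp.smul_apply, Module.Basis.repr_self,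
      smul_eq_mul]
    rcases eq_or_ne i p with rfl | h
    · simp
    · simp [Finsupp.single_apply, hσ.ne h, h]
  simpa using LinearMap.congr_fun h x

lemma repr_shift_zero {k M ι : Type*} [Field k] [AddCommGroup M] [Module k M]
    (T : Module.Basis ι k M) (f : M →ₗ[k] M) (σ : ι → ι)
    (a : ι → k) (hf : ∀ p, f (T p) = a p • T (σ p)) (x : M) (q : ι)
    (hq : q ∉ Set.range σ) :
    T.repr (f x) q = 0 := by
  have h : (Finsupp.lapply q).comp (T.repr.toLinearMap.comp f) = (0 : M →ₗ[k] k) := by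
    apply T.ext
    intro i
    have hne : σ i ≠ q := fun h => hq ⟨i, h⟩
    simp [hf i, Finsupp.single_apply, hne]
  simpa using LinearMap.congr_fun h x

open TensorProduct in
/-- the half quantum group `𝒰^{≥0}(𝔰𝔩₂)` (q not a root of unity) — a Hopf
algebra with generators `E`, `K^{±1}`, relation `K E K⁻¹ = q² E`, PBW basis
`{E^m K^j : m ∈ ℕ, j ∈ ℤ}`, `ΔE = E⊗1 + K⊗E`, `ΔK = K⊗K` — is not quasi-cocommutative:
there is no invertible `R ∈ 𝒰^{≥0} ⊗ 𝒰^{≥0}` with `Δᵒᵖ(h) = R Δ(h) R⁻¹` for all `h`. -/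
theorem stmt2 {k : Type*} [Field k] [IsAlgClosed k] [CharZero k]
    {H : Type*} [Ring H] [HopfAlgebra k H]
    (q : k) (hq0 : q ≠ 0) (hq1 : q ≠ 1) (hq2 : q ≠ -1)
    (hroot : ∀ n : ℕ, 0 < n → q ^ n ≠ 1)
    (E : H) (K : Hˣ)
    (hrel : (K : H) * E = q ^ 2 • (E * (K : H)))
    (hb1 : LinearIndependent k (fun p : ℕ × ℤ => E ^ p.1 * ((K ^ p.2 : Hˣ) : H)))
    (hb2 : Submodule.span k
      (Set.range fun p : ℕ × ℤ => E ^ p.1 * ((K ^ p.2 : Hˣ) : H)) = ⊤)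
    (hΔE : Coalgebra.comul (R := k) E = E ⊗ₜ[k] (1 : H) + (K : H) ⊗ₜ[k] E)
    (hΔK : Coalgebra.comul (R := k) (K : H) = (K : H) ⊗ₜ[k] (K : H)) :
    ¬ ∃ R : H ⊗[k] H, IsUnit R ∧ ∀ h : H,
      (TensorProduct.comm k H H) (Coalgebra.comul (R := k) h) * R =
        R * Coalgebra.comul (R := k) h := by
  rintro ⟨R, hRu, hR⟩
  set u : k := q ^ 2 with hu_def
  have hu : u ≠ 0 := pow_ne_zero _ hq0
  -- basic commutation relations
  have hKE : (K : H) * E = u • (E * (K : H)) := hrel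
  have hEK : E * (K : H) = u⁻¹ • ((K : H) * E) := by
    rw [hKE, smul_smul, inv_mul_cancel₀ hu, one_smul]
  have hKiE : ((K⁻¹ : Hˣ) : H) * E = u⁻¹ • (E * ((K⁻¹ : Hˣ) : H)) := by
    have h1 : ((K⁻¹ : Hˣ) : H) * E
        = ((K⁻¹ : Hˣ) : H) * (E * (K : H)) * ((K⁻¹ : Hˣ) : H) := by
      rw [mul_assoc, mul_assoc, Units.mul_inv, mul_one]
    rw [h1, hEK, mul_smul_comm, smul_mul_assoc, ← mul_assoc, Units.inv_mul, one_mul]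
  -- K^j E = u^j E K^j for j : ℤ
  have hKz : ∀ j : ℤ, ((K ^ j : Hˣ) : H) * E = u ^ j • (E * ((K ^ j : Hˣ) : H)) := by
    intro j
    induction j using Int.induction_on with
    | zero => simp
    | succ i ih =>
        have hcast : ((K ^ ((i : ℤ) + 1) : Hˣ) : H) = ((K ^ (i : ℤ) : Hˣ) : H) * (K : H) := by
          rw [zpow_add_one, Units.val_mul]
        rw [hcast, mul_assoc, hKE, mul_smul_comm, ← mul_assoc, ih, smul_mul_assoc,
          smul_smul, mul_comm, ← zpow_add_one₀ hu, mul_assoc]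
    | pred i ih =>
        have hcast : ((K ^ (-(i : ℤ) - 1) : Hˣ) : H)
            = ((K ^ (-(i : ℤ)) : Hˣ) : H) * ((K⁻¹ : Hˣ) : H) := by
          rw [zpow_sub_one, Units.val_mul]
        rw [hcast, mul_assoc, hKiE, mul_smul_comm, ← mul_assoc, ih, smul_mul_assoc,
          smul_smul, mul_comm, ← zpow_sub_one₀ hu, mul_assoc]
  -- K E^n = u^n E^n K for n : ℕ
  have hKEn : ∀ n : ℕ, (K : H) * E ^ n = u ^ n • (E ^ n * (K : H)) := by
    intro n
    induction n with
    | zero => simp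
    | succ s ih =>
        rw [pow_succ, ← mul_assoc, ih, smul_mul_assoc, mul_assoc, hKE, mul_smul_comm,
          smul_smul, ← pow_succ, ← mul_assoc, ← pow_succ]
  -- the basis of H
  set b : ℕ × ℤ → H := fun p => E ^ p.1 * ((K ^ p.2 : Hˣ) : H) with hbdef
  let B : Module.Basis (ℕ × ℤ) k H := Module.Basis.mk hb1 hb2.ge
  have hB : ∀ p, B p = b p := fun p => Module.Basis.mk_apply hb1 hb2.ge p
  -- multiplication rules for basis vectors
  have hbE1 : ∀ n : ℕ, ∀ l : ℤ, E * b (n, l) = b (n + 1, l) := by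
    intro n l
    simp only [hbdef]
    rw [← mul_assoc, ← pow_succ']
  have hbK1 : ∀ n : ℕ, ∀ l : ℤ, (K : H) * b (n, l) = u ^ n • b (n, l + 1) := by
    intro n l
    have hKK : (K : H) * ((K ^ l : Hˣ) : H) = ((K ^ (l + 1) : Hˣ) : H) := by
      rw [show l + 1 = 1 + l from add_comm l 1, zpow_add, zpow_one, Units.val_mul]
    simp only [hbdef]
    rw [← mul_assoc, hKEn, smul_mul_assoc, mul_assoc, hKK]
  have hbE2 : ∀ m : ℕ, ∀ j : ℤ, b (m, j) * E = u ^ j • b (m + 1, j) := by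
    intro m j
    simp only [hbdef]
    rw [mul_assoc, hKz, mul_smul_comm, ← mul_assoc, ← pow_succ]
  have hbK2 : ∀ m : ℕ, ∀ j : ℤ, b (m, j) * (K : H) = b (m, j + 1) := by
    intro m j
    have hKK : ((K ^ j : Hˣ) : H) * (K : H) = ((K ^ (j + 1) : Hˣ) : H) := by
      rw [zpow_add_one, Units.val_mul]
    simp only [hbdef]
    rw [mul_assoc, hKK]
  -- the basis of H ⊗ H
  let T : Module.Basis ((ℕ × ℤ) × (ℕ × ℤ)) k (H ⊗[k] H) := Module.Basis.tensorProduct B B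
  have hT : ∀ p : (ℕ × ℤ) × (ℕ × ℤ), T p = b p.1 ⊗ₜ[k] b p.2 := by
    intro p
    rw [Module.Basis.tensorProduct_apply', hB, hB]
  -- the four multiplication operators and their shift data
  let f₁ : H ⊗[k] H →ₗ[k] H ⊗[k] H := LinearMap.mulLeft k ((1 : H) ⊗ₜ[k] E)
  let f₂ : H ⊗[k] H →ₗ[k] H ⊗[k] H := LinearMap.mulLeft k (E ⊗ₜ[k] (K : H))
  let f₃ : H ⊗[k] H →ₗ[k] H ⊗[k] H := LinearMap.mulRight k (E ⊗ₜ[k] (1 : H))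
  let f₄ : H ⊗[k] H →ₗ[k] H ⊗[k] H := LinearMap.mulRight k ((K : H) ⊗ₜ[k] E)
  let σ₁ : (ℕ × ℤ) × (ℕ × ℤ) → (ℕ × ℤ) × (ℕ × ℤ) := fun p => (p.1, (p.2.1 + 1, p.2.2))
  let σ₂ : (ℕ × ℤ) × (ℕ × ℤ) → (ℕ × ℤ) × (ℕ × ℤ) :=
    fun p => ((p.1.1 + 1, p.1.2), (p.2.1, p.2.2 + 1))
  let σ₃ : (ℕ × ℤ) × (ℕ × ℤ) → (ℕ × ℤ) × (ℕ × ℤ) := fun p => ((p.1.1 + 1, p.1.2), p.2)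
  let σ₄ : (ℕ × ℤ) × (ℕ × ℤ) → (ℕ × ℤ) × (ℕ × ℤ) :=
    fun p => ((p.1.1, p.1.2 + 1), (p.2.1 + 1, p.2.2))
  let a₁ : (ℕ × ℤ) × (ℕ × ℤ) → k := fun _ => 1
  let a₂ : (ℕ × ℤ) × (ℕ × ℤ) → k := fun p => u ^ p.2.1
  let a₃ : (ℕ × ℤ) × (ℕ × ℤ) → k := fun p => u ^ p.1.2
  let a₄ : (ℕ × ℤ) × (ℕ × ℤ) → k := fun p => u ^ p.2.2
  have hσ₁ : Function.Injective σ₁ := by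
    rintro ⟨⟨m, j⟩, ⟨n, l⟩⟩ ⟨⟨m', j'⟩, ⟨n', l'⟩⟩ h
    simp only [σ₁, Prod.ext_iff] at h ⊢
    omega
  have hσ₂ : Function.Injective σ₂ := by
    rintro ⟨⟨m, j⟩, ⟨n, l⟩⟩ ⟨⟨m', j'⟩, ⟨n', l'⟩⟩ h
    simp only [σ₂, Prod.ext_iff] at h ⊢
    omega
  have hσ₃ : Function.Injective σ₃ := by
    rintro ⟨⟨m, j⟩, ⟨n, l⟩⟩ ⟨⟨m', j'⟩, ⟨n', l'⟩⟩ h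
    simp only [σ₃, Prod.ext_iff] at h ⊢
    omega
  have hσ₄ : Function.Injective σ₄ := by
    rintro ⟨⟨m, j⟩, ⟨n, l⟩⟩ ⟨⟨m', j'⟩, ⟨n', l'⟩⟩ h
    simp only [σ₄, Prod.ext_iff] at h ⊢
    omega
  have hf₁ : ∀ p, f₁ (T p) = a₁ p • T (σ₁ p) := by
    intro ⟨⟨m, j⟩, ⟨n, l⟩⟩
    simp only [f₁, a₁, σ₁, LinearMap.mulLeft_apply, hT, one_smul]
    rw [Algebra.TensorProduct.tmul_mul_tmul, one_mul, hbE1]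
  have hf₂ : ∀ p, f₂ (T p) = a₂ p • T (σ₂ p) := by
    intro ⟨⟨m, j⟩, ⟨n, l⟩⟩
    simp only [f₂, a₂, σ₂, LinearMap.mulLeft_apply, hT]
    rw [Algebra.TensorProduct.tmul_mul_tmul, hbE1, hbK1, tmul_smul]
  have hf₃ : ∀ p, f₃ (T p) = a₃ p • T (σ₃ p) := by
    intro ⟨⟨m, j⟩, ⟨n, l⟩⟩
    simp only [f₃, a₃, σ₃, LinearMap.mulRight_apply, hT]
    rw [Algebra.TensorProduct.tmul_mul_tmul, mul_one, hbE2, smul_tmul']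
  have hf₄ : ∀ p, f₄ (T p) = a₄ p • T (σ₄ p) := by
    intro ⟨⟨m, j⟩, ⟨n, l⟩⟩
    simp only [f₄, a₄, σ₄, LinearMap.mulRight_apply, hT]
    rw [Algebra.TensorProduct.tmul_mul_tmul, hbK2, hbE2, tmul_smul]
  -- coordinates of R
  set c : ((ℕ × ℤ) × (ℕ × ℤ)) →₀ k := T.repr R with hcdef
  have hS : c.support.Nonempty := by
    rcases Finset.eq_empty_or_nonempty c.support with h | h
    · exfalso
      have hc0 : c = 0 := Finsupp.support_eq_empty.mp h
      have hR0 : R = 0 := by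
        have := congrArg T.repr.symm hc0
        simpa [hcdef] using this
      haveI : Nontrivial (H ⊗[k] H) := nontrivial_of_ne (T ((0, 0), (0, 0))) 0 (T.ne_zero _)
      exact hRu.ne_zero hR0
    · exact h
  -- degree data
  set deg : (ℕ × ℤ) × (ℕ × ℤ) → ℕ := fun p => p.1.1 + p.2.1 with hdegdef
  set D : ℕ := (c.support.image deg).max' (hS.image deg) with hDdef
  have hD1 : ∀ p ∈ c.support, deg p ≤ D :=
    fun p hp => Finset.le_max' _ _ (Finset.mem_image_of_mem deg hp)
  have hD2 : ∃ p ∈ c.support, deg p = D := by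
    have := Finset.max'_mem (c.support.image deg) (hS.image deg)
    rw [Finset.mem_image] at this
    obtain ⟨p, hp, hpd⟩ := this
    exact ⟨p, hp, hpd⟩
  set S' : Finset ((ℕ × ℤ) × (ℕ × ℤ)) := c.support.filter (fun p => deg p = D) with hS'def
  have hS' : S'.Nonempty := by
    obtain ⟨p, hp, hpd⟩ := hD2
    exact ⟨p, Finset.mem_filter.mpr ⟨hp, hpd⟩⟩
  set m₀ : ℕ := (S'.image (fun p => p.1.1)).max' (hS'.image _) with hm₀def
  have hm1 : ∀ p ∈ c.support, deg p = D → p.1.1 ≤ m₀ := by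
    intro p hp hpd
    exact Finset.le_max' (S'.image (fun p => p.1.1)) _
      (Finset.mem_image_of_mem _ (Finset.mem_filter.mpr ⟨hp, hpd⟩))
  have hm2 : ∃ p₀ ∈ c.support, deg p₀ = D ∧ p₀.1.1 = m₀ := by
    have := Finset.max'_mem (S'.image (fun p => p.1.1)) (hS'.image _)
    rw [Finset.mem_image] at this
    obtain ⟨p, hp, hpm⟩ := this
    rw [Finset.mem_filter] at hp
    exact ⟨p, hp.1, hp.2, hpm⟩
  obtain ⟨p₀, hp₀mem, hp₀deg, hp₀m⟩ := hm2
  set n₀ : ℕ := p₀.2.1 with hn₀def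
  have hmn : m₀ + n₀ = D := by
    have : p₀.1.1 + p₀.2.1 = D := hp₀deg
    omega
  have hzero : ∀ p : (ℕ × ℤ) × (ℕ × ℤ), p.1.1 + p.2.1 = D → p.1.1 = m₀ + 1 → c p = 0 := by
    intro p h1 h2
    by_contra hc
    have hp : p ∈ c.support := Finsupp.mem_support_iff.mpr hc
    have := hm1 p hp h1
    omega
  -- the basic equation from h = E
  have hEq := hR E
  rw [hΔE, map_add, TensorProduct.comm_tmul, TensorProduct.comm_tmul] at hEq
  have hEq2 : f₁ R + f₂ R = f₃ R + f₄ R := by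
    simp only [f₁, f₂, f₃, f₄, LinearMap.mulLeft_apply, LinearMap.mulRight_apply]
    rw [← add_mul, ← mul_add]
    exact hEq
  -- the key recursion
  have key : ∀ j l : ℤ, u ^ n₀ * c ((m₀, j), (n₀, l)) = u ^ j * c ((m₀, j), (n₀, l + 1)) := by
    intro j l
    have h := DFunLike.congr_fun (congrArg T.repr hEq2) (((m₀ + 1, j), (n₀, l + 1)))
    rw [map_add, map_add, Finsupp.add_apply, Finsupp.add_apply] at h
    have h1 : T.repr (f₁ R) ((m₀ + 1, j), (n₀, l + 1)) = 0 := by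
      rcases n₀.eq_zero_or_pos with h0 | hpos
      · apply repr_shift_zero T f₁ σ₁ a₁ hf₁
        rintro ⟨p, hp⟩
        simp only [σ₁, Prod.ext_iff] at hp
        omega
      · obtain ⟨s, hs⟩ : ∃ s, n₀ = s + 1 := ⟨n₀ - 1, by omega⟩
        have : (((m₀ + 1, j), (n₀, l + 1)) : (ℕ × ℤ) × (ℕ × ℤ))
            = σ₁ ((m₀ + 1, j), (s, l + 1)) := by
          simp only [σ₁]
          rw [hs]
        rw [this, repr_shift_apply T f₁ σ₁ hσ₁ a₁ hf₁, ← hcdef,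
          hzero ((m₀ + 1, j), (s, l + 1)) (by simp; omega) rfl, mul_zero]
    have h4 : T.repr (f₄ R) ((m₀ + 1, j), (n₀, l + 1)) = 0 := by
      rcases n₀.eq_zero_or_pos with h0 | hpos
      · apply repr_shift_zero T f₄ σ₄ a₄ hf₄
        rintro ⟨p, hp⟩
        simp only [σ₄, Prod.ext_iff] at hp
        omega
      · obtain ⟨s, hs⟩ : ∃ s, n₀ = s + 1 := ⟨n₀ - 1, by omega⟩
        have : (((m₀ + 1, j), (n₀, l + 1)) : (ℕ × ℤ) × (ℕ × ℤ))
            = σ₄ ((m₀ + 1, j - 1), (s, l + 1)) := by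
          simp only [σ₄]
          rw [hs]
          simp
        rw [this, repr_shift_apply T f₄ σ₄ hσ₄ a₄ hf₄, ← hcdef,
          hzero ((m₀ + 1, j - 1), (s, l + 1)) (by simp; omega) rfl, mul_zero]
    have h2 : T.repr (f₂ R) ((m₀ + 1, j), (n₀, l + 1)) = u ^ n₀ * c ((m₀, j), (n₀, l)) := by
      have : (((m₀ + 1, j), (n₀, l + 1)) : (ℕ × ℤ) × (ℕ × ℤ)) = σ₂ ((m₀, j), (n₀, l)) := rfl
      rw [this, repr_shift_apply T f₂ σ₂ hσ₂ a₂ hf₂, ← hcdef]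
    have h3 : T.repr (f₃ R) ((m₀ + 1, j), (n₀, l + 1)) = u ^ j * c ((m₀, j), (n₀, l + 1)) := by
      have : (((m₀ + 1, j), (n₀, l + 1)) : (ℕ × ℤ) × (ℕ × ℤ)) = σ₃ ((m₀, j), (n₀, l + 1)) := rfl
      rw [this, repr_shift_apply T f₃ σ₃ hσ₃ a₃ hf₃, ← hcdef]
    rw [h1, h2, h3, h4, zero_add, add_zero] at h
    exact h
  -- infinitely many nonzero coefficients: contradiction
  set j₀ : ℤ := p₀.1.2 with hj₀def
  set l₀ : ℤ := p₀.2.2 with hl₀def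
  have hp₀eq : p₀ = ((m₀, j₀), (n₀, l₀)) := by
    refine Prod.ext (Prod.ext ?_ rfl) (Prod.ext rfl rfl)
    exact hp₀m
  have hne : ∀ t : ℕ, c ((m₀, j₀), (n₀, l₀ + t)) ≠ 0 := by
    intro t
    induction t with
    | zero =>
        have := Finsupp.mem_support_iff.mp hp₀mem
        rw [hp₀eq] at this
        simpa using this
    | succ s ih =>
        have hk := key j₀ (l₀ + s)
        intro h0
        rw [show (l₀ + (s : ℤ)) + 1 = l₀ + ((s + 1 : ℕ) : ℤ) by push_cast; ring, h0,
          mul_zero] at hk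
        exact (mul_ne_zero (pow_ne_zero _ hu) ih) hk
  have hinj : Function.Injective
      (fun t : ℕ => (((m₀, j₀), (n₀, l₀ + (t : ℤ))) : (ℕ × ℤ) × (ℕ × ℤ))) := by
    intro s t h
    simp only [Prod.ext_iff] at h
    omega
  have hInf : (↑c.support : Set ((ℕ × ℤ) × (ℕ × ℤ))).Infinite :=
    Set.infinite_of_injective_forall_mem hinj
      (fun t => by simpa [Finsupp.mem_support_iff] using hne t)
  exact hInf c.support.finite_toSet
end

section
/- Suppose R = Σ_{j,l ∈ ℤ} a_{j,l} K^j ⊗ K^l ∈ k[K^{±1}] ⊗ k[K^{±1}] (finite sum) satisfies RΔ(E) = Δ^op(E)R in 𝒰^{≥0}(𝔰𝔩₂) ⊗ 𝒰^{≥0}(𝔰𝔩₂), where q is not a root of unity. Then the coefficients satisfy a_{j,l} = q^{2l} a_{j−1,l} and a_{j,l} = q^{2j} a_{j,l+1} for all j,l ∈ ℤ, and consequently R = 0. -/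
open TensorProduct in
/-- if `R = Σ_{j,l} a_{j,l} K^j ⊗ K^l` (finite sum) satisfies
`R Δ(E) = Δᵒᵖ(E) R` in `𝒰^{≥0}(𝔰𝔩₂) ⊗ 𝒰^{≥0}(𝔰𝔩₂)` with `q` not a root of unity, then
`a_{j,l} = q^{2l} a_{j−1,l}` and `a_{j,l} = q^{2j} a_{j,l+1}` for all `j, l ∈ ℤ`, and
consequently `R = 0` (all coefficients vanish). -/
theorem stmt3 {k : Type*} [Field k] [IsAlgClosed k] [CharZero k]
    {H : Type*} [Ring H] [HopfAlgebra k H]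
    (q : k) (hq0 : q ≠ 0) (hroot : ∀ n : ℕ, 0 < n → q ^ n ≠ 1)
    (E : H) (K : Hˣ)
    (hrel : (K : H) * E = q ^ 2 • (E * (K : H)))
    (hb1 : LinearIndependent k (fun p : ℕ × ℤ => E ^ p.1 * ((K ^ p.2 : Hˣ) : H)))
    (hb2 : Submodule.span k
      (Set.range fun p : ℕ × ℤ => E ^ p.1 * ((K ^ p.2 : Hˣ) : H)) = ⊤)
    (hΔE : Coalgebra.comul (R := k) E = E ⊗ₜ[k] (1 : H) + (K : H) ⊗ₜ[k] E)
    (hΔK : Coalgebra.comul (R := k) (K : H) = (K : H) ⊗ₜ[k] (K : H))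
    (a : ℤ × ℤ →₀ k) (R : H ⊗[k] H)
    (hRdef : R = a.sum fun p c => c • (((K ^ p.1 : Hˣ) : H) ⊗ₜ[k] ((K ^ p.2 : Hˣ) : H)))
    (hR : (TensorProduct.comm k H H) (Coalgebra.comul (R := k) E) * R =
      R * Coalgebra.comul (R := k) E) :
    (∀ j l : ℤ, a (j, l) = q ^ (2 * l) * a (j - 1, l) ∧
      a (j, l) = q ^ (2 * j) * a (j, l + 1)) ∧ a = 0 ∧ R = 0 := by
  classical
  -- commutation of K-powers with E
  have hq2ne : (q ^ (2:ℕ) : k) ≠ 0 := pow_ne_zero _ hq0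
  have hKinv : ((K⁻¹ : Hˣ) : H) * E = (q ^ (2:ℕ))⁻¹ • (E * ((K⁻¹ : Hˣ) : H)) := by
    have hEK : E * (K : H) = (q ^ (2:ℕ))⁻¹ • ((K : H) * E) := by
      rw [hrel, smul_smul, inv_mul_cancel₀ hq2ne, one_smul]
    calc ((K⁻¹ : Hˣ) : H) * E
        = ((K⁻¹ : Hˣ) : H) * (E * ((K : Hˣ) : H)) * ((K⁻¹ : Hˣ) : H) := by
          rw [mul_assoc, mul_assoc, Units.mul_inv, mul_one]
      _ = (q ^ (2:ℕ))⁻¹ • (((K⁻¹ : Hˣ) : H) * ((K : H) * E) * ((K⁻¹ : Hˣ) : H)) := by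
          rw [hEK, mul_smul_comm, smul_mul_assoc]
      _ = (q ^ (2:ℕ))⁻¹ • (E * ((K⁻¹ : Hˣ) : H)) := by
          rw [← mul_assoc, Units.inv_mul, one_mul]
  have hq2 : ∀ j : ℤ, ((K ^ j : Hˣ) : H) * E = q ^ (2*j) • (E * ((K ^ j : Hˣ) : H)) := by
    intro j
    induction j using Int.induction_on with
    | zero => simp
    | succ n ih =>
      rw [show ((n:ℤ)+1) = (n:ℤ)+1 from rfl, zpow_add_one, Units.val_mul, mul_assoc, hrel,
        mul_smul_comm, ← mul_assoc, ih, smul_mul_assoc, smul_smul, mul_assoc]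
      congr 1
      rw [← zpow_natCast q 2, ← zpow_add₀ hq0]
      congr 1
      push_cast
      ring
    | pred n ih =>
      rw [zpow_sub_one, Units.val_mul, mul_assoc, hKinv, mul_smul_comm, ← mul_assoc, ih,
        smul_mul_assoc, smul_smul, mul_assoc]
      congr 1
      rw [← zpow_natCast q 2, ← zpow_neg, ← zpow_add₀ hq0]
      congr 1
      push_cast
      ring
  -- basis of H
  let B : Module.Basis (ℕ × ℤ) k H := Module.Basis.mk hb1 (by rw [hb2])
  have hBa : ∀ p : ℕ × ℤ, B p = E ^ p.1 * ((K ^ p.2 : Hˣ) : H) := fun p => Module.Basis.mk_apply hb1 _ p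
  -- the rewritten relation
  have hR' : (a.sum fun p c => c • (B (0,p.1) ⊗ₜ[k] B (1,p.2) + B (1,p.1) ⊗ₜ[k] B (0,p.2+1)))
      = a.sum fun p c => c • (q^(2*p.1) • (B (1,p.1) ⊗ₜ[k] B (0,p.2))
          + q^(2*p.2) • (B (0,p.1+1) ⊗ₜ[k] B (1,p.2))) := by
    have hKmulL : ∀ l : ℤ, (K : H) * ((K ^ l : Hˣ) : H) = ((K ^ (l+1) : Hˣ) : H) := by
      intro l; rw [add_comm, zpow_one_add, Units.val_mul]
    have hKmulR : ∀ l : ℤ, ((K ^ l : Hˣ) : H) * (K : H) = ((K ^ (l+1) : Hˣ) : H) := by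
      intro l; rw [zpow_add_one, Units.val_mul]
    have hDop : (TensorProduct.comm k H H) (Coalgebra.comul (R := k) E)
        = (1:H) ⊗ₜ[k] E + E ⊗ₜ[k] (K:H) := by
      rw [hΔE, map_add, TensorProduct.comm_tmul, TensorProduct.comm_tmul]
    rw [hDop, hΔE, hRdef, Finsupp.mul_sum, Finsupp.sum_mul] at hR
    refine Eq.trans ?_ (hR.trans ?_)
    · refine (Finsupp.sum_congr fun p _ => ?_).symm
      rw [mul_smul_comm, add_mul, Algebra.TensorProduct.tmul_mul_tmul,
        Algebra.TensorProduct.tmul_mul_tmul, one_mul, hKmulL]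
      simp only [hBa, pow_zero, pow_one, one_mul]
    · refine Finsupp.sum_congr fun p _ => ?_
      rw [smul_mul_assoc, mul_add, Algebra.TensorProduct.tmul_mul_tmul,
        Algebra.TensorProduct.tmul_mul_tmul, mul_one, hKmulR, hq2, hq2,
        TensorProduct.smul_tmul', TensorProduct.tmul_smul]
      simp only [hBa, pow_zero, pow_one, one_mul]
  have main : ∀ m1 : ℕ, ∀ j : ℤ, ∀ m2 : ℕ, ∀ l : ℤ,
      (a.sum fun p c => c * ((if (0,p.1) = (m1,j) then 1 else 0) * (if ((1:ℕ),p.2) = (m2,l) then 1 else 0)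
          + (if ((1:ℕ),p.1) = (m1,j) then 1 else 0) * (if ((0:ℕ),p.2+1) = (m2,l) then 1 else 0)))
      = a.sum fun p c => c * (q^(2*p.1) * ((if ((1:ℕ),p.1) = (m1,j) then 1 else 0) * (if ((0:ℕ),p.2) = (m2,l) then 1 else 0))
          + q^(2*p.2) * ((if ((0:ℕ),p.1+1) = (m1,j) then 1 else 0) * (if ((1:ℕ),p.2) = (m2,l) then 1 else 0))) := by
    intro m1 j m2 l
    have h := congrArg ((Finsupp.lapply ((m1,j),(m2,l)) : (((ℕ×ℤ)×(ℕ×ℤ)) →₀ k) →ₗ[k] k).comp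
      (Module.Basis.tensorProduct B B).repr.toLinearMap) hR'
    simp only [map_finsuppSum] at h
    simpa [map_finsuppSum, Finsupp.sum_apply, Module.Basis.tensorProduct_repr_tmul_apply,
      Module.Basis.repr_self, Finsupp.single_apply, mul_add, mul_comm, mul_left_comm] using h
  -- recurrence 1 : a (j,l) = q^(2l) a(j-1,l)
  have hsum : ∀ (p0 : ℤ×ℤ) (g : ℤ×ℤ → k),
      (a.sum fun p c => if p = p0 then c * g p else 0) = a p0 * g p0 := by
    intro p0 g
    rw [Finsupp.sum_ite_eq' a p0 (fun p c => c * g p)]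
    by_cases h : p0 ∈ a.support
    · rw [if_pos h]
    · rw [if_neg h, Finsupp.notMem_support_iff.mp h, zero_mul]
  have rec1 : ∀ j l : ℤ, a (j, l) = q ^ (2 * l) * a (j - 1, l) := by
    intro j l
    have h := main 0 j 1 l
    simp only [Prod.mk.injEq, one_ne_zero, zero_ne_one, false_and, if_false, true_and,
      mul_zero, mul_one, add_zero, zero_add, mul_ite, zero_mul, ite_mul, one_mul] at h
    simp only [show ∀ x:ℤ, (x + 1 = j) ↔ (x = j - 1) from fun x => by omega] at h
    have e1 := Finsupp.sum_congr (f := a)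
      (g1 := fun p c => if p.2 = l then if p.1 = j then c else 0 else 0)
      (g2 := fun p c => if p = (j,l) then c * 1 else 0)
      (fun p _ => by
        by_cases h1 : p.2 = l <;> by_cases h2 : p.1 = j <;> simp [h1, h2, Prod.ext_iff])
    have e2 := Finsupp.sum_congr (f := a)
      (g1 := fun p c => if p.2 = l then if p.1 = j - 1 then c * q ^ (2 * p.2) else 0 else 0)
      (g2 := fun p c => if p = (j-1,l) then c * q ^ (2 * p.2) else 0)
      (fun p _ => by
        by_cases h1 : p.2 = l <;> by_cases h2 : p.1 = j - 1 <;> simp [h1, h2, Prod.ext_iff])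
    rw [e1, e2, hsum, hsum, mul_one] at h
    rw [h, mul_comm]
  have rec2' : ∀ j l : ℤ, a (j, l - 1) = q ^ (2 * j) * a (j, l) := by
    intro j l
    have h := main 1 j 0 l
    simp only [Prod.mk.injEq, one_ne_zero, zero_ne_one, false_and, if_false, true_and,
      mul_zero, mul_one, add_zero, zero_add, mul_ite, zero_mul, ite_mul, one_mul] at h
    simp only [show ∀ x:ℤ, (x + 1 = l) ↔ (x = l - 1) from fun x => by omega] at h
    have e1 := Finsupp.sum_congr (f := a)
      (g1 := fun p c => if p.2 = l - 1 then if p.1 = j then c else 0 else 0)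
      (g2 := fun p c => if p = (j, l-1) then c * 1 else 0)
      (fun p _ => by
        by_cases h1 : p.2 = l - 1 <;> by_cases h2 : p.1 = j <;> simp [h1, h2, Prod.ext_iff])
    have e2 := Finsupp.sum_congr (f := a)
      (g1 := fun p c => if p.2 = l then if p.1 = j then c * q ^ (2 * p.1) else 0 else 0)
      (g2 := fun p c => if p = (j,l) then c * q ^ (2 * p.1) else 0)
      (fun p _ => by
        by_cases h1 : p.2 = l <;> by_cases h2 : p.1 = j <;> simp [h1, h2, Prod.ext_iff])
    rw [e1, e2, hsum, hsum, mul_one] at h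
    rw [h, mul_comm]
  have rec2 : ∀ j l : ℤ, a (j, l) = q ^ (2 * j) * a (j, l + 1) := by
    intro j l
    have h := rec2' j (l + 1)
    rwa [add_sub_cancel_right] at h
  have ha0 : a = 0 := by
    by_contra hne
    obtain ⟨⟨j, l⟩, hp⟩ : ∃ p, a p ≠ 0 := by
      by_contra h'
      push_neg at h'
      exact hne (Finsupp.ext fun p => by rw [h' p, Finsupp.coe_zero, Pi.zero_apply])
    have hall : ∀ n : ℕ, a (j, l + n) ≠ 0 := by
      intro n
      induction n with
      | zero => simpa using hp
      | succ m ih =>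
        intro h0
        apply ih
        have h1 := rec2 j (l + m)
        rw [h1]
        convert mul_zero _ using 2
        rw [← h0]
        congr 1
        push_cast
        ring
    have hmem : ∀ n : ℕ, ((j, l + n) : ℤ × ℤ) ∈ (a.support : Set (ℤ × ℤ)) :=
      fun n => Finsupp.mem_support_iff.mpr (hall n)
    have hinj : Function.Injective (fun n : ℕ => ((j, l + n) : ℤ × ℤ)) := by
      intro m n h
      simp only [Prod.mk.injEq, true_and] at h
      omega
    exact (Set.infinite_of_injective_forall_mem hinj hmem) (a.support.finite_toSet)
  refine ⟨fun j l => ⟨rec1 j l, rec2 j l⟩, ha0, ?_⟩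
  rw [hRdef, ha0]
  simp
end

section
/- For q not a root of unity, every Verma module M(σ) over 𝒰^{≥0}(𝔰𝔩₂) is a projective object in the category 𝒲 of weight modules: given weight modules M, L, a surjective morphism f : M → L and any morphism g : M(σ) → L in 𝒲, there exists a morphism φ : M(σ) → M with f∘φ = g. -/
/-- A module over the half quantum group `𝒰^{≥0}(𝔰𝔩₂) = k⟨E, K^{±1}⟩` with relation
`K E K⁻¹ = q² E`, presented as a vector space with operators `E`, `K`, `K⁻¹`. -/
structure HalfQModule (k : Type*) [Field k] (q : k) (V : Type*)
    [AddCommGroup V] [Module k V] where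
  E : V →ₗ[k] V
  K : V →ₗ[k] V
  Kinv : V →ₗ[k] V
  hK1 : K ∘ₗ Kinv = LinearMap.id
  hK2 : Kinv ∘ₗ K = LinearMap.id
  rel : K ∘ₗ E = q ^ 2 • (E ∘ₗ K)

variable {k : Type*} [Field k] {q : k}

/-- `(M, v)` is a Verma module of weight `σ`: `{E^m · v}` is a `k`-basis and
`K·(E^m·v) = q^{2m}σ E^m·v`. -/
def IsVerma {V : Type*} [AddCommGroup V] [Module k V] (σ : k)
    (M : HalfQModule k q V) (v : V) : Prop :=
  (∀ m : ℕ, M.K ((M.E ^ m) v) = (q ^ (2 * m) * σ) • ((M.E ^ m) v)) ∧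
  LinearIndependent k (fun m : ℕ => (M.E ^ m) v) ∧
  Submodule.span k (Set.range fun m : ℕ => (M.E ^ m) v) = ⊤

/-- A subspace invariant under the 𝒰^{≥0}-action, i.e. a submodule. -/
def Invt {V : Type*} [AddCommGroup V] [Module k V] (M : HalfQModule k q V)
    (p : Submodule k V) : Prop :=
  (∀ x ∈ p, M.E x ∈ p) ∧ (∀ x ∈ p, M.K x ∈ p) ∧ (∀ x ∈ p, M.Kinv x ∈ p)

/-- A homomorphism of 𝒰^{≥0}(𝔰𝔩₂)-modules. -/
def IsHom {V W : Type*} [AddCommGroup V] [Module k V] [AddCommGroup W] [Module k W]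
    (M : HalfQModule k q V) (N : HalfQModule k q W) (f : V →ₗ[k] W) : Prop :=
  f ∘ₗ M.E = N.E ∘ₗ f ∧ f ∘ₗ M.K = N.K ∘ₗ f

/-- A weight module: direct sum of the `K`-eigenspaces for `σ ∈ k^×`. -/
def IsWeight {V : Type*} [AddCommGroup V] [Module k V] (M : HalfQModule k q V) : Prop :=
  (⨆ σ : kˣ, LinearMap.ker (M.K - (σ : k) • LinearMap.id)) = ⊤
/-- A hom intertwining `E` intertwines powers of `E`. -/
lemma hom_pow_E {V W : Type*} [AddCommGroup V] [Module k V] [AddCommGroup W] [Module k W]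
    (M : HalfQModule k q V) (N : HalfQModule k q W) (f : V →ₗ[k] W)
    (h : f ∘ₗ M.E = N.E ∘ₗ f) (x : V) (m : ℕ) :
    f ((M.E ^ m) x) = (N.E ^ m) (f x) := by
  induction m with
  | zero => simp
  | succ n ih =>
    have h' := LinearMap.ext_iff.mp h ((M.E ^ n) x)
    simp only [LinearMap.comp_apply] at h'
    rw [pow_succ', Module.End.mul_apply, h', ih, ← Module.End.mul_apply, ← pow_succ']

/-- `K` acts on `E^m w` by `q^{2m} σ` if it acts on `w` by `σ`. -/
lemma K_pow_E {V : Type*} [AddCommGroup V] [Module k V]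
    (M : HalfQModule k q V) (w : V) (σ : k) (hw : M.K w = σ • w) (m : ℕ) :
    M.K ((M.E ^ m) w) = (q ^ (2 * m) * σ) • (M.E ^ m) w := by
  induction m with
  | zero => simpa using hw
  | succ n ih =>
    have h' := LinearMap.ext_iff.mp M.rel ((M.E ^ n) w)
    simp only [LinearMap.comp_apply, LinearMap.smul_apply] at h'
    rw [pow_succ', Module.End.mul_apply, h', ih, map_smul, smul_smul]
    congr 1
    ring

/-- Verma modules are projective in the category 𝒲 of weight modules:
any morphism g : M(σ) → L lifts along a surjection f : M → L of weight modules. -/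
theorem stmt12 {k : Type*} [Field k] (q : k) (hq0 : q ≠ 0)
    (hq : ∀ n : ℕ, 0 < n → q ^ n ≠ 1) (σ : k) (hσ : σ ≠ 0)
    {P V L : Type*} [AddCommGroup P] [Module k P] [AddCommGroup V] [Module k V]
    [AddCommGroup L] [Module k L]
    (MP : HalfQModule k q P) (vσ : P) (hMP : IsVerma σ MP vσ)
    (M : HalfQModule k q V) (Lm : HalfQModule k q L)
    (hMw : IsWeight M) (hLw : IsWeight Lm)
    (f : V →ₗ[k] L) (hf : IsHom M Lm f) (hfs : Function.Surjective f)
    (g : P →ₗ[k] L) (hg : IsHom MP Lm g) :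
    ∃ φ : P →ₗ[k] V, IsHom MP M φ ∧ f ∘ₗ φ = g := by
  classical
  obtain ⟨hK, hli, hsp⟩ := hMP
  -- the basis of the Verma module
  let b : Module.Basis ℕ k P := Module.Basis.mk hli (by rw [hsp])
  have hb : ∀ m : ℕ, b m = (MP.E ^ m) vσ := fun m => Module.Basis.mk_apply hli _ m
  -- K acts on vσ by σ
  have hKv : MP.K vσ = σ • vσ := by simpa using hK 0
  -- hence K acts on y := g vσ by σ
  set y : L := g vσ with hy
  have hKy : Lm.K y = σ • y := by
    have := LinearMap.ext_iff.mp hg.2 vσ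
    simp only [LinearMap.comp_apply] at this
    rw [hy, ← this, hKv, map_smul]
  -- σ as a unit
  set σu : kˣ := Units.mk0 σ hσ with hσu
  -- the weight-space family on L, and its independence
  set p : kˣ → Submodule k L := fun τ => LinearMap.ker (Lm.K - (τ : k) • LinearMap.id) with hp
  have hpeig : ∀ τ : kˣ, p τ = Module.End.eigenspace Lm.K (τ : k) := by
    intro τ
    ext z
    simp [hp, Module.End.mem_eigenspace_iff, LinearMap.mem_ker, sub_eq_zero]
  have hind : iSupIndep p := by
    have h1 : iSupIndep (Module.End.eigenspace Lm.K) := Module.End.eigenspaces_iSupIndep Lm.K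
    have h2 : iSupIndep fun τ : kˣ => Module.End.eigenspace Lm.K (τ : k) := h1.comp (fun _ _ h => Units.ext h)
    simpa only [← hpeig] using h2
  -- find a preimage of y in the σ-weight space of V
  obtain ⟨x, hx⟩ := hfs y
  have hxmem : x ∈ ⨆ τ : kˣ, LinearMap.ker (M.K - (τ : k) • LinearMap.id) := by
    rw [hMw]; trivial
  obtain ⟨c, hc, hcsum⟩ := (Submodule.mem_iSup_iff_exists_finsupp _ x).mp hxmem
  set w : V := c σu with hw
  have hKw : M.K w = σ • w := by
    have h := hc σu
    rw [LinearMap.mem_ker, LinearMap.sub_apply, LinearMap.smul_apply, LinearMap.id_apply,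
      sub_eq_zero] at h
    simpa [hw, hσu] using h
  -- f maps weight spaces to weight spaces
  have hfp : ∀ (τ : kˣ) (z : V), z ∈ LinearMap.ker (M.K - (τ : k) • LinearMap.id) →
      f z ∈ p τ := by
    intro τ z hz
    rw [LinearMap.mem_ker, LinearMap.sub_apply, LinearMap.smul_apply, LinearMap.id_apply,
      sub_eq_zero] at hz
    rw [hp]
    rw [LinearMap.mem_ker, LinearMap.sub_apply, LinearMap.smul_apply, LinearMap.id_apply,
      sub_eq_zero]
    have h2 := LinearMap.ext_iff.mp hf.2 z
    simp only [LinearMap.comp_apply] at h2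
    rw [← h2, hz, map_smul]
  -- f w = y
  have hfw : f w = y := by
    have hz1 : y - f w ∈ p σu := by
      refine sub_mem ?_ (hfp σu w (hc σu))
      rw [hp]
      rw [LinearMap.mem_ker, LinearMap.sub_apply, LinearMap.smul_apply, LinearMap.id_apply,
        sub_eq_zero]
      simpa [hσu] using hKy
    have hxsum : x = ∑ τ ∈ c.support, c τ := by
      rw [← hcsum]; rfl
    have hdiff : x - w = ∑ τ ∈ c.support.erase σu, c τ := by
      by_cases hmem : σu ∈ c.support
      · rw [Finset.sum_erase_eq_sub hmem, ← hxsum, hw]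
      · rw [Finset.erase_eq_of_notMem hmem, ← hxsum, hw,
          Finsupp.notMem_support_iff.mp hmem, sub_zero]
    have hz2 : y - f w ∈ ⨆ τ, ⨆ (_ : τ ≠ σu), p τ := by
      have : y - f w = ∑ τ ∈ c.support.erase σu, f (c τ) := by
        rw [← hx, ← map_sub, hdiff, map_sum]
      rw [this]
      refine Submodule.sum_mem _ fun τ hτ => ?_
      exact Submodule.mem_iSup_of_mem τ
        (Submodule.mem_iSup_of_mem (Finset.ne_of_mem_erase hτ) (hfp τ (c τ) (hc τ)))
    have h0 := Submodule.disjoint_def.mp (hind σu) _ hz1 hz2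
    rw [sub_eq_zero] at h0
    exact h0.symm
  -- construct φ on the basis
  set φ : P →ₗ[k] V := Module.Basis.constr b k fun m => (M.E ^ m) w with hφ
  have hφb : ∀ m : ℕ, φ (b m) = (M.E ^ m) w := fun m => Module.Basis.constr_basis b k _ m
  refine ⟨φ, ⟨?_, ?_⟩, ?_⟩
  · -- intertwines E
    apply b.ext
    intro m
    simp only [LinearMap.comp_apply]
    rw [hb m, ← Module.End.mul_apply, ← pow_succ', ← hb (m + 1), hφb, ← hb m, hφb,
      pow_succ', Module.End.mul_apply]
  · -- intertwines K
    apply b.ext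
    intro m
    simp only [LinearMap.comp_apply]
    rw [hb m, hK m, map_smul, ← hb m, hφb, K_pow_E M w σ hKw m]
  · -- f ∘ φ = g
    apply b.ext
    intro m
    simp only [LinearMap.comp_apply]
    rw [hφb, hom_pow_E M Lm f hf.1 w m, hfw, hy, ← hom_pow_E MP Lm g hg.1 vσ m, hb m]
end

section
/- For q not a root of unity and σ, σ' ∈ k^×, there is an isomorphism of 𝒰^{≥0}(𝔰𝔩₂)-modules M(σ) ⊗ M(σ') ≅ ⊕_{m=0}^{∞} M(q^{2m} σ σ'), with the summand indexed by m generated by the lowest weight vector E^m·v_σ ⊗ v_{σ'}. -/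
variable {k : Type*} [Field k] {q : k}

open TensorProduct in
/-- `T` is the tensor product module structure on `V ⊗ W` induced by the comultiplication
`ΔK = K⊗K`, `ΔE = E⊗1 + K⊗E` of `𝒰^{≥0}(𝔰𝔩₂)`. -/
def IsTensorStruct {V W : Type*} [AddCommGroup V] [Module k V] [AddCommGroup W] [Module k W]
    (A : HalfQModule k q V) (B : HalfQModule k q W) (T : HalfQModule k q (V ⊗[k] W)) : Prop :=
  T.K = TensorProduct.map A.K B.K ∧
  T.E = TensorProduct.map A.E LinearMap.id + TensorProduct.map A.K B.E

/-- The 1-dimensional module `V_σ`: `K` acts by `σ ∈ k^×`, `E` by `0`. -/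
def scalarMod (q : k) (σ : kˣ) : HalfQModule k q k where
  E := 0
  K := (σ : k) • LinearMap.id
  Kinv := ((σ⁻¹ : kˣ) : k) • LinearMap.id
  hK1 := by apply LinearMap.ext; intro x; simp [smul_smul]
  hK2 := by apply LinearMap.ext; intro x; simp [smul_smul]
  rel := by simp



def qcoef (q σ : k) (m : ℕ) : ℕ → ℕ → k
  | 0, i => if i = 0 then 1 else 0
  | j+1, i => (if i = 0 then 0 else qcoef q σ m j (i-1)) + q ^ (2*(m+i)) * σ * qcoef q σ m j i

lemma qcoef_eq_zero {σ : k} {m j i : ℕ} (h : j < i) : qcoef q σ m j i = 0 := by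
  induction j generalizing i with
  | zero => simp [qcoef, show i ≠ 0 by omega]
  | succ j ih =>
    have h1 : j < i - 1 := by omega
    have h2 : j < i := by omega
    simp [qcoef, ih h1, ih h2, show i ≠ 0 by omega]

lemma qcoef_corner {σ : k} (m j : ℕ) : qcoef q σ m j 0 = σ ^ j * q ^ (2*m*j) := by
  induction j with
  | zero => simp [qcoef]
  | succ j ih =>
    simp only [qcoef, reduceIte, ih, zero_add]
    rw [show 2*m*(j+1) = 2*(m+0) + 2*m*j by ring, pow_add, pow_succ]
    ring

open TensorProduct in
/-- `M(σ) ⊗ M(σ') ≅ ⊕_{m ∈ ℕ} M(q^{2m} σ σ')`, the summand indexed by `m`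
being generated by the lowest weight vector `E^m·v_σ ⊗ v_{σ'}`: the vectors
`E^j·(E^m·v_σ ⊗ v_{σ'})` form a k-basis of the tensor product, have weight
`q^{2(m+j)} σ σ'`, and the cyclic submodules generated by the `E^m·v_σ ⊗ v_{σ'}` fill up
the whole module. -/
theorem stmt16 {k : Type*} [Field k] (q : k) (hq0 : q ≠ 0)
    (hq : ∀ n : ℕ, 0 < n → q ^ n ≠ 1) (σ σ' : k) (hσ : σ ≠ 0) (hσ' : σ' ≠ 0)
    {V W : Type*} [AddCommGroup V] [Module k V] [AddCommGroup W] [Module k W]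
    (A : HalfQModule k q V) (v : V) (hA : IsVerma σ A v)
    (B : HalfQModule k q W) (w : W) (hB : IsVerma σ' B w)
    (T : HalfQModule k q (V ⊗[k] W)) (hT : IsTensorStruct A B T)
    (u : ℕ → V ⊗[k] W) (hu : ∀ m : ℕ, u m = ((A.E ^ m) v) ⊗ₜ[k] w) :
    (∀ m j : ℕ, T.K ((T.E ^ j) (u m)) =
        (q ^ (2 * (m + j)) * (σ * σ')) • ((T.E ^ j) (u m))) ∧
    LinearIndependent k (fun p : ℕ × ℕ => (T.E ^ p.2) (u p.1)) ∧
    (⨆ m : ℕ, Submodule.span k (Set.range fun j : ℕ => (T.E ^ j) (u m))) = ⊤ := by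
  classical
  obtain ⟨hAK, hAli, hAsp⟩ := hA
  obtain ⟨hBK, hBli, hBsp⟩ := hB
  obtain ⟨hTK, hTE⟩ := hT
  -- basis of the tensor product
  let bb : Module.Basis (ℕ × ℕ) k (V ⊗[k] W) :=
    (Module.Basis.mk hAli hAsp.ge).tensorProduct (Module.Basis.mk hBli hBsp.ge)
  have hbb : ∀ a c : ℕ, bb (a, c) = ((A.E ^ a) v) ⊗ₜ[k] ((B.E ^ c) w) := by
    intro a c
    simp only [bb, Module.Basis.tensorProduct_apply, Module.Basis.mk_apply]
  have hKw : B.K w = σ' • w := by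
    have := hBK 0; simpa using this
  -- the action of T.E on basis vectors
  have hstep : ∀ a c : ℕ, T.E (((A.E ^ a) v) ⊗ₜ[k] ((B.E ^ c) w)) =
      ((A.E ^ (a+1)) v) ⊗ₜ[k] ((B.E ^ c) w) +
        (q ^ (2*a) * σ) • (((A.E ^ a) v) ⊗ₜ[k] ((B.E ^ (c+1)) w)) := by
    intro a c
    rw [hTE]
    simp only [LinearMap.add_apply, TensorProduct.map_tmul, LinearMap.id_apply, hAK a]
    rw [pow_succ' A.E, pow_succ' B.E, Module.End.mul_apply, Module.End.mul_apply,
      TensorProduct.smul_tmul']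
  -- Part 1 : weights
  have part1 : ∀ m j : ℕ, T.K ((T.E ^ j) (u m)) =
      (q ^ (2 * (m + j)) * (σ * σ')) • ((T.E ^ j) (u m)) := by
    intro m j
    induction j with
    | zero =>
      simp only [pow_zero, Module.End.one_apply, hu, hTK, TensorProduct.map_tmul, hAK m, hKw,
        TensorProduct.smul_tmul', TensorProduct.tmul_smul, smul_smul]
      rw [show 2*(m+0) = 2*m by ring]
      ring_nf
    | succ j ih =>
      have hp : (T.E ^ (j+1)) (u m) = T.E ((T.E ^ j) (u m)) := by
        rw [pow_succ', Module.End.mul_apply]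
      have hrel : ∀ x : V ⊗[k] W, T.K (T.E x) = q ^ 2 • T.E (T.K x) := by
        intro x
        have := LinearMap.congr_fun T.rel x
        simpa using this
      rw [hp, hrel, ih, map_smul, smul_smul]
      congr 1
      rw [show 2*(m+(j+1)) = 2 + 2*(m+j) by ring, pow_add]
      ring
  -- expansion of E^j (u m) in the basis
  have hexp : ∀ j m : ℕ, (T.E ^ j) (u m) =
      ∑ i ∈ Finset.range (j+1),
        qcoef q σ m j i • (((A.E ^ (m+i)) v) ⊗ₜ[k] ((B.E ^ (j-i)) w)) := by
    intro j
    induction j with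
    | zero => intro m; simp [qcoef, hu]
    | succ j ih =>
      intro m
      rw [pow_succ', Module.End.mul_apply, ih m, map_sum]
      have lhs_eq : ∀ i ∈ Finset.range (j+1),
          T.E (qcoef q σ m j i • (((A.E ^ (m+i)) v) ⊗ₜ[k] ((B.E ^ (j-i)) w))) =
          qcoef q σ m j i • (((A.E ^ (m+i+1)) v) ⊗ₜ[k] ((B.E ^ (j-i)) w)) +
            (q ^ (2*(m+i)) * σ * qcoef q σ m j i) •
              (((A.E ^ (m+i)) v) ⊗ₜ[k] ((B.E ^ (j-i+1)) w)) := by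
        intro i hi
        rw [map_smul, hstep, smul_add, smul_smul]
        ring_nf
      rw [Finset.sum_congr rfl lhs_eq, Finset.sum_add_distrib]
      -- now the RHS
      have rhs_eq : ∀ i : ℕ,
          qcoef q σ m (j+1) i • (((A.E ^ (m+i)) v) ⊗ₜ[k] ((B.E ^ (j+1-i)) w)) =
          (if i = 0 then 0 else qcoef q σ m j (i-1)) •
              (((A.E ^ (m+i)) v) ⊗ₜ[k] ((B.E ^ (j+1-i)) w)) +
            (q ^ (2*(m+i)) * σ * qcoef q σ m j i) •
              (((A.E ^ (m+i)) v) ⊗ₜ[k] ((B.E ^ (j+1-i)) w)) := by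
        intro i
        rw [← add_smul]
        rfl
      rw [Finset.sum_congr rfl (fun i _ => rhs_eq i), Finset.sum_add_distrib]
      congr 1
      · -- first sums
        conv_rhs => rw [Finset.sum_range_succ']
        simp only [reduceIte, zero_smul, add_zero]
        refine Finset.sum_congr rfl (fun i hi => ?_)
        have h1 : ¬ (i + 1 = 0) := by omega
        rw [if_neg h1]
        have h2 : i + 1 - 1 = i := by omega
        have h3 : j + 1 - (i+1) = j - i := by omega
        have h4 : m + (i+1) = m + i + 1 := by omega
        rw [h2, h3, h4]
      · -- second sums
        conv_rhs => rw [Finset.sum_range_succ]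
        rw [qcoef_eq_zero (by omega : j < j+1), mul_zero, zero_smul, add_zero]
        refine Finset.sum_congr rfl (fun i hi => ?_)
        have hi' : i ≤ j := by
          have := Finset.mem_range.mp hi; omega
        have h3 : j + 1 - i = j - i + 1 := by omega
        rw [h3]
  -- coordinates
  have hrepr : ∀ j m : ℕ, ∀ p : ℕ × ℕ, bb.repr ((T.E ^ j) (u m)) p =
      ∑ i ∈ Finset.range (j+1), qcoef q σ m j i * (if ((m+i : ℕ), (j-i : ℕ)) = p then 1 else 0) := by
    intro j m p
    rw [hexp j m]
    have : ∀ i : ℕ, (((A.E ^ (m+i)) v) ⊗ₜ[k] ((B.E ^ (j-i)) w)) = bb (m+i, j-i) := by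
      intro i; rw [hbb]
    simp only [this]
    rw [map_sum]
    rw [Finsupp.finset_sum_apply]
    refine Finset.sum_congr rfl (fun i _ => ?_)
    rw [map_smul, Finsupp.smul_apply, Module.Basis.repr_self, Finsupp.single_apply, smul_eq_mul]
  have hzero : ∀ j m : ℕ, ∀ a c : ℕ, ¬ (m ≤ a ∧ m + j = a + c) →
      bb.repr ((T.E ^ j) (u m)) (a, c) = 0 := by
    intro j m a c hcond
    rw [hrepr]
    refine Finset.sum_eq_zero (fun i hi => ?_)
    have hij : i ≤ j := by have := Finset.mem_range.mp hi; omega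
    have : ¬ (((m+i : ℕ), (j-i : ℕ)) = ((a : ℕ), (c : ℕ))) := by
      intro h
      rw [Prod.mk.injEq] at h
      exact hcond ⟨by omega, by omega⟩
    rw [if_neg this, mul_zero]
  have hone : ∀ j m : ℕ, bb.repr ((T.E ^ j) (u m)) (m, j) = qcoef q σ m j 0 := by
    intro j m
    rw [hrepr]
    rw [Finset.sum_eq_single_of_mem 0 (Finset.mem_range.mpr (by omega))]
    · simp
    · intro i hi hi0
      have : ¬ (((m+i : ℕ), (j-i : ℕ)) = ((m : ℕ), (j : ℕ))) := by
        intro h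
        rw [Prod.mk.injEq] at h
        omega
      rw [if_neg this, mul_zero]
  have hc0 : ∀ m j : ℕ, qcoef q σ m j 0 ≠ 0 := by
    intro m j
    rw [qcoef_corner]
    exact mul_ne_zero (pow_ne_zero _ hσ) (pow_ne_zero _ hq0)
  refine ⟨part1, ?_, ?_⟩
  · -- linear independence
    rw [linearIndependent_iff']
    intro s gg hsum p1 hp1
    by_contra hg1
    set d := p1.1 + p1.2 with hd
    set t := s.filter (fun p => gg p ≠ 0 ∧ p.1 + p.2 = d) with htdef
    have htp1 : p1 ∈ t := Finset.mem_filter.mpr ⟨hp1, hg1, rfl⟩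
    have htne : (t.image Prod.fst).Nonempty := ⟨p1.1, Finset.mem_image_of_mem _ htp1⟩
    obtain ⟨p0, hp0t, hp0⟩ := Finset.mem_image.mp ((t.image Prod.fst).min'_mem htne)
    have hp0f := Finset.mem_filter.mp hp0t
    have hp0s : p0 ∈ s := hp0f.1
    have hgp0 : gg p0 ≠ 0 := hp0f.2.1
    have hp0d : p0.1 + p0.2 = d := hp0f.2.2
    have h0 := congrArg (fun x => bb.repr x (p0.1, p0.2)) hsum
    simp only [map_sum, map_smul, Finsupp.finset_sum_apply, Finsupp.smul_apply,
      smul_eq_mul, map_zero, Finsupp.coe_zero, Pi.zero_apply] at h0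
    rw [Finset.sum_eq_single_of_mem p0 hp0s] at h0
    · have : bb.repr ((T.E ^ p0.2) (u p0.1)) (p0.1, p0.2) = qcoef q σ p0.1 p0.2 0 :=
        hone p0.2 p0.1
      rw [this] at h0
      exact hgp0 (by
        have := mul_eq_zero.mp h0
        rcases this with h | h
        · exact h
        · exact absurd h (hc0 p0.1 p0.2))
    · intro p hps hpne
      by_cases hgp : gg p = 0
      · rw [hgp, zero_mul]
      · by_cases hcond : p.1 ≤ p0.1 ∧ p.1 + p.2 = p0.1 + p0.2
        · exfalso
          have hpt : p ∈ t := Finset.mem_filter.mpr ⟨hps, hgp, by omega⟩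
          have hle : p0.1 ≤ p.1 :=
            le_of_eq_of_le hp0 (Finset.min'_le _ _ (Finset.mem_image_of_mem _ hpt))
          have h1 : p.1 = p0.1 := le_antisymm hcond.1 hle
          have h2 : p.2 = p0.2 := by omega
          exact hpne (Prod.ext h1 h2)
        · rw [hzero p.2 p.1 p0.1 p0.2 (by omega), mul_zero]
  · -- spanning
    set S := ⨆ m : ℕ, Submodule.span k (Set.range fun j : ℕ => (T.E ^ j) (u m)) with hS
    have hEinv : ∀ x : V ⊗[k] W, x ∈ S → T.E x ∈ S := by
      intro x hx
      refine Submodule.iSup_induction _ (motive := fun y => T.E y ∈ S) hx ?_ ?_ ?_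
      · intro m y hy
        have hmap : T.E y ∈ Submodule.span k (Set.range fun j : ℕ => (T.E ^ j) (u m)) := by
          have h1 : T.E y ∈ Submodule.map T.E
              (Submodule.span k (Set.range fun j : ℕ => (T.E ^ j) (u m))) :=
            Submodule.mem_map_of_mem hy
          rw [Submodule.map_span] at h1
          refine Submodule.span_le.mpr ?_ h1
          rintro z ⟨z', ⟨j, rfl⟩, rfl⟩
          refine Submodule.subset_span ⟨j+1, ?_⟩
          show (T.E ^ (j+1)) (u m) = T.E ((T.E ^ j) (u m))
          rw [pow_succ', Module.End.mul_apply]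
        exact Submodule.mem_iSup_of_mem m hmap
      · show T.E (0 : V ⊗[k] W) ∈ S
        rw [map_zero]; exact Submodule.zero_mem S
      · intro a b ha hb
        show T.E (a + b) ∈ S
        rw [map_add]; exact Submodule.add_mem S ha hb
    have hg : ∀ c a : ℕ, (((A.E ^ a) v) ⊗ₜ[k] ((B.E ^ c) w)) ∈ S := by
      intro c
      induction c with
      | zero =>
        intro a
        refine Submodule.mem_iSup_of_mem a (Submodule.subset_span ⟨0, ?_⟩)
        simp [hu]
      | succ c ih =>
        intro a
        have h1 : T.E (((A.E ^ a) v) ⊗ₜ[k] ((B.E ^ c) w)) ∈ S := hEinv _ (ih a)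
        have h2 : (q ^ (2*a) * σ) • (((A.E ^ a) v) ⊗ₜ[k] ((B.E ^ (c+1)) w)) ∈ S := by
          have := Submodule.sub_mem S h1 (ih (a+1))
          rw [hstep a c] at this
          simpa using this
        have hne : (q ^ (2*a) * σ) ≠ 0 := mul_ne_zero (pow_ne_zero _ hq0) hσ
        have := Submodule.smul_mem S (q ^ (2*a) * σ)⁻¹ h2
        rwa [smul_smul, inv_mul_cancel₀ hne, one_smul] at this
    rw [eq_top_iff, ← bb.span_eq, Submodule.span_le]
    rintro z ⟨⟨a, c⟩, rfl⟩
    rw [hbb]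
    exact hg c a
end

section
/- For q not a root of unity, M(σ) ⊗ M(σ') ≅ M(σ') ⊗ M(σ) as 𝒰^{≥0}(𝔰𝔩₂)-modules for all σ, σ' ∈ k^×, even though 𝒰^{≥0} is not quasi-cocommutative. -/
variable {k : Type*} [Field k] {q : k}

section Aux17

/-- Coefficient array for the expansion of `E^r (v ⊗ E^m w)` in the basis
`E^i v ⊗ E^j w`. -/
noncomputable def coefD (q σ : k) : ℕ → ℕ → k
  | 0, 0 => 1
  | 0, _+1 => 0
  | r+1, 0 => σ * coefD q σ r 0
  | r+1, i+1 => coefD q σ r i + q ^ (2*(i+1)) * σ * coefD q σ r (i+1)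

lemma coefD_gt (σ : k) : ∀ r i, r < i → coefD q σ r i = 0 := by
  intro r
  induction r with
  | zero =>
    intro i hi
    match i, hi with
    | (j+1), _ => rfl
  | succ r ih =>
    intro i hi
    match i, hi with
    | (j+1), hi =>
      show coefD q σ r j + q ^ (2*(j+1)) * σ * coefD q σ r (j+1) = 0
      rw [ih j (by omega), ih (j+1) (by omega)]
      ring

lemma coefD_diag (σ : k) : ∀ r, coefD q σ r r = 1 := by
  intro r
  induction r with
  | zero => rfl
  | succ r ih =>
    show coefD q σ r r + q ^ (2*(r+1)) * σ * coefD q σ r (r+1) = 1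
    rw [ih, coefD_gt σ r (r+1) (by omega)]
    ring

lemma pow_succ_apply' {V : Type*} [AddCommGroup V] [Module k V]
    (f : V →ₗ[k] V) (z : V) (n : ℕ) :
    f ((f ^ n) z) = (f ^ (n+1)) z := by
  rw [pow_succ']; rfl

lemma HalfQModule.K_pow {V : Type*} [AddCommGroup V] [Module k V]
    (M : HalfQModule k q V) (z : V) (r : ℕ) :
    M.K ((M.E ^ r) z) = q ^ (2*r) • (M.E ^ r) (M.K z) := by
  induction r with
  | zero => simp
  | succ r ih =>
    have hrel : ∀ x, M.K (M.E x) = q ^ 2 • M.E (M.K x) := by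
      intro x
      have := LinearMap.ext_iff.mp M.rel x
      simpa using this
    rw [← pow_succ_apply', hrel, ih, map_smul, smul_smul, pow_succ_apply',
      ← pow_add]
    congr 2
    omega

open TensorProduct in
lemma exists_std {V W : Type*} [AddCommGroup V] [Module k V] [AddCommGroup W] [Module k W]
    (σ σ' : k) (A : HalfQModule k q V) (v : V) (hA : IsVerma σ A v)
    (B : HalfQModule k q W) (w : W) (hB : IsVerma σ' B w)
    (T : HalfQModule k q (V ⊗[k] W)) (hT : IsTensorStruct A B T) :
    (∀ m : ℕ, T.K (v ⊗ₜ[k] ((B.E ^ m) w)) =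
      (q ^ (2*m) * (σ * σ')) • (v ⊗ₜ[k] ((B.E ^ m) w))) ∧
    LinearIndependent k (fun p : ℕ × ℕ => (T.E ^ p.2) (v ⊗ₜ[k] ((B.E ^ p.1) w))) ∧
    Submodule.span k (Set.range fun p : ℕ × ℕ => (T.E ^ p.2) (v ⊗ₜ[k] ((B.E ^ p.1) w))) = ⊤ := by
  classical
  obtain ⟨hAK, hAli, hAsp⟩ := hA
  obtain ⟨hBK, hBli, hBsp⟩ := hB
  obtain ⟨hTK, hTE⟩ := hT
  set x : ℕ → ℕ → V ⊗[k] W := fun i j => ((A.E ^ i) v) ⊗ₜ[k] ((B.E ^ j) w) with hxdef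
  have hx0 : ∀ m, x 0 m = v ⊗ₜ[k] ((B.E ^ m) w) := by
    intro m; simp [hxdef]
  have hfun : (fun p : ℕ × ℕ => (T.E ^ p.2) (v ⊗ₜ[k] ((B.E ^ p.1) w))) =
      fun p : ℕ × ℕ => (T.E ^ p.2) (x 0 p.1) := by
    funext p; rw [hx0]
  -- pointwise action on pure tensors
  have hKt : ∀ (a : V) (c : W), T.K (a ⊗ₜ[k] c) = A.K a ⊗ₜ[k] B.K c := by
    intro a c; rw [hTK]; simp
  have hEt : ∀ (a : V) (c : W),
      T.E (a ⊗ₜ[k] c) = (A.E a) ⊗ₜ[k] c + (A.K a) ⊗ₜ[k] (B.E c) := by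
    intro a c; rw [hTE]; simp
  have hEx : ∀ i j, T.E (x i j) = x (i+1) j + (q ^ (2*i) * σ) • x i (j+1) := by
    intro i j
    show T.E (((A.E ^ i) v) ⊗ₜ[k] ((B.E ^ j) w)) = _
    rw [hEt, hAK i]
    rw [TensorProduct.smul_tmul']
    congr 2
    · exact pow_succ_apply' A.E v i
    · exact pow_succ_apply' B.E w j
  -- eigenvector property of x 0 m
  have hKu : ∀ m, T.K (x 0 m) = (q ^ (2*m) * (σ * σ')) • x 0 m := by
    intro m
    show T.K (((A.E ^ 0) v) ⊗ₜ[k] ((B.E ^ m) w)) = _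
    rw [hKt, hAK 0, hBK m]
    simp only [TensorProduct.tmul_smul, TensorProduct.smul_tmul', smul_smul]
    congr 1
    ring
  -- expansion of E^r (x 0 m)
  have expand : ∀ r m, (T.E ^ r) (x 0 m) =
      ∑ i ∈ Finset.range (r+1), coefD q σ r i • x i (m + r - i) := by
    intro r
    induction r with
    | zero =>
      intro m
      simp [coefD]
    | succ r ih =>
      intro m
      rw [← pow_succ_apply', ih m, map_sum]
      have h2 : ∀ i ∈ Finset.range (r+1),
          T.E (coefD q σ r i • x i (m + r - i)) =
          coefD q σ r i • x (i+1) (m + r - i)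
            + (q ^ (2*i) * σ * coefD q σ r i) • x i (m + (r+1) - i) := by
        intro i hi
        simp only [Finset.mem_range, Nat.lt_succ_iff] at hi
        have harg : m + r - i + 1 = m + (r+1) - i := by omega
        have hc : coefD q σ r i * (q ^ (2*i) * σ) = q ^ (2*i) * σ * coefD q σ r i := by
          ring
        rw [map_smul, hEx, smul_add, smul_smul, harg, hc]
      rw [Finset.sum_congr rfl h2, Finset.sum_add_distrib]
      have hRHS : ∑ i ∈ Finset.range (r+1+1), coefD q σ (r+1) i • x i (m + (r+1) - i)
          = (∑ i ∈ Finset.range (r+1), coefD q σ r i • x (i+1) (m + r - i))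
            + ∑ i ∈ Finset.range (r+1), (q ^ (2*i) * σ * coefD q σ r i) • x i (m + (r+1) - i) := by
        rw [Finset.sum_range_succ']
        have e1 : ∀ i ∈ Finset.range (r+1),
            coefD q σ (r+1) (i+1) • x (i+1) (m + (r+1) - (i+1)) =
            coefD q σ r i • x (i+1) (m + r - i)
              + (q ^ (2*(i+1)) * σ * coefD q σ r (i+1)) • x (i+1) (m + (r+1) - (i+1)) := by
          intro i hi
          show (coefD q σ r i + q ^ (2*(i+1)) * σ * coefD q σ r (i+1)) • _ = _
          rw [add_smul]
          congr 3
          omega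
        rw [Finset.sum_congr rfl e1, Finset.sum_add_distrib, add_assoc]
        congr 1
        have e0 : coefD q σ (r+1) 0 • x 0 (m + (r+1) - 0) =
            (q ^ (2*0) * σ * coefD q σ r 0) • x 0 (m + (r+1) - 0) := by
          show (σ * coefD q σ r 0) • _ = _
          congr 1
          ring
        rw [e0]
        have := (Finset.sum_range_succ'
          (fun i => (q ^ (2*i) * σ * coefD q σ r i) • x i (m + (r+1) - i)) (r+1)).symm
        rw [this, Finset.sum_range_succ, coefD_gt σ r (r+1) (by omega)]
        simp
      rw [hRHS]
  -- the basis of V ⊗ W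
  let bV : Module.Basis ℕ k V := Module.Basis.mk hAli hAsp.ge
  let bW : Module.Basis ℕ k W := Module.Basis.mk hBli hBsp.ge
  let b : Module.Basis (ℕ × ℕ) k (V ⊗[k] W) := Module.Basis.tensorProduct bV bW
  have hb : ∀ i j, b (i, j) = x i j := by
    intro i j
    rw [Module.Basis.tensorProduct_apply, Module.Basis.mk_apply, Module.Basis.mk_apply]
  -- coordinates of E^r (x 0 m)
  have hrepr : ∀ m r i0 j0, (b.repr ((T.E ^ r) (x 0 m))) (i0, j0) =
      if i0 ≤ r ∧ i0 + j0 = m + r then coefD q σ r i0 else 0 := by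
    intro m r i0 j0
    rw [expand r m, map_sum, Finsupp.finset_sum_apply]
    have hterm : ∀ i ∈ Finset.range (r+1),
        (b.repr (coefD q σ r i • x i (m + r - i))) (i0, j0) =
        if i = i0 ∧ i0 + j0 = m + r then coefD q σ r i else 0 := by
      intro i hi
      simp only [Finset.mem_range, Nat.lt_succ_iff] at hi
      rw [map_smul, ← hb, b.repr_self, Finsupp.smul_apply, Finsupp.single_apply,
        smul_eq_mul]
      simp only [Prod.mk.injEq]
      by_cases h1 : i = i0
      · subst h1
        by_cases h2 : i + j0 = m + r
        · have h3 : m + r - i = j0 := by omega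
          simp [h2, h3]
        · have h3 : ¬ (m + r - i = j0) := by omega
          simp [h2, h3]
      · simp [h1]
    rw [Finset.sum_congr rfl hterm]
    by_cases hc : i0 ≤ r ∧ i0 + j0 = m + r
    · rw [if_pos hc, Finset.sum_eq_single i0]
      · rw [if_pos ⟨rfl, hc.2⟩]
      · intro i hi hne
        rw [if_neg]
        rintro ⟨rfl, -⟩
        exact hne rfl
      · intro hni
        exact absurd (Finset.mem_range.mpr (by omega)) hni
    · rw [if_neg hc]
      apply Finset.sum_eq_zero
      intro i hi
      simp only [Finset.mem_range, Nat.lt_succ_iff] at hi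
      rw [if_neg]
      rintro ⟨rfl, h2⟩
      exact hc ⟨hi, h2⟩
  -- linear independence
  have hli : LinearIndependent k (fun p : ℕ × ℕ => (T.E ^ p.2) (x 0 p.1)) := by
    rw [linearIndependent_iff']
    intro s g hsum p hp
    by_contra hgp
    have hne : (s.filter (fun pp : ℕ × ℕ => g pp ≠ 0 ∧ pp.1 + pp.2 = p.1 + p.2)).Nonempty :=
      ⟨p, Finset.mem_filter.mpr ⟨hp, hgp, rfl⟩⟩
    obtain ⟨pm, hpm, hmax⟩ := Finset.exists_max_image _ (fun pp : ℕ × ℕ => pp.2) hne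
    obtain ⟨hpms, hgpm, hdeg⟩ := Finset.mem_filter.mp hpm
    have h0 : (b.repr (∑ pp ∈ s, g pp • (T.E ^ pp.2) (x 0 pp.1))) (pm.2, pm.1) = 0 := by
      rw [hsum]; simp
    rw [map_sum, Finsupp.finset_sum_apply] at h0
    have hterm : ∀ pp ∈ s,
        (b.repr (g pp • (T.E ^ pp.2) (x 0 pp.1))) (pm.2, pm.1) =
        g pp * (b.repr ((T.E ^ pp.2) (x 0 pp.1))) (pm.2, pm.1) := by
      intro pp _
      rw [map_smul, Finsupp.smul_apply, smul_eq_mul]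
    rw [Finset.sum_congr rfl hterm] at h0
    have hsingle : ∀ pp ∈ s, pp ≠ pm →
        g pp * (b.repr ((T.E ^ pp.2) (x 0 pp.1))) (pm.2, pm.1) = 0 := by
      intro pp hpps hppne
      by_cases hg : g pp = 0
      · rw [hg, zero_mul]
      · rw [hrepr, if_neg, mul_zero]
        rintro ⟨h1, h2⟩
        have hdegpp : pp.1 + pp.2 = p.1 + p.2 := by omega
        have hle : pp.2 ≤ pm.2 :=
          hmax pp (Finset.mem_filter.mpr ⟨hpps, hg, hdegpp⟩)
        have h22 : pp.2 = pm.2 := le_antisymm hle h1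
        exact hppne (Prod.ext (by omega) h22)
    rw [Finset.sum_eq_single pm hsingle (fun hns => absurd hpms hns)] at h0
    rw [hrepr, if_pos ⟨le_refl _, by omega⟩, coefD_diag σ pm.2, mul_one] at h0
    exact hgpm h0
  -- spanning
  have hspan : Submodule.span k (Set.range fun p : ℕ × ℕ => (T.E ^ p.2) (x 0 p.1)) = ⊤ := by
    set S := Submodule.span k (Set.range fun p : ℕ × ℕ => (T.E ^ p.2) (x 0 p.1)) with hS
    have hmem : ∀ m r, (T.E ^ r) (x 0 m) ∈ S := fun m r =>
      Submodule.subset_span ⟨(m, r), rfl⟩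
    have hE : ∀ z ∈ S, T.E z ∈ S := by
      intro z hz
      have hle : S ≤ S.comap T.E := by
        rw [hS]
        apply Submodule.span_le.mpr
        rintro _ ⟨⟨m, r⟩, rfl⟩
        apply Submodule.mem_comap.mpr
        rw [pow_succ_apply']
        exact hmem m (r+1)
      exact hle hz
    have hxS : ∀ i j, x i j ∈ S := by
      intro i
      induction i with
      | zero =>
        intro j
        have := hmem j 0
        simpa using this
      | succ i ih =>
        intro j
        have h1 : x (i+1) j = T.E (x i j) - (q ^ (2*i) * σ) • x i (j+1) := by
          rw [hEx i j, add_sub_cancel_right]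
        rw [h1]
        exact Submodule.sub_mem _ (hE _ (ih j)) (Submodule.smul_mem _ _ (ih (j+1)))
    rw [eq_top_iff, ← b.span_eq]
    apply Submodule.span_le.mpr
    rintro _ ⟨⟨i, j⟩, rfl⟩
    rw [hb i j]
    exact hxS i j
  refine ⟨fun m => by rw [← hx0]; exact hKu m, ?_, ?_⟩
  · rw [hfun]; exact hli
  · rw [hfun]; exact hspan

lemma iso_of_std {X Y : Type*} [AddCommGroup X] [Module k X] [AddCommGroup Y] [Module k Y]
    (TX : HalfQModule k q X) (TY : HalfQModule k q Y) (lam : k)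
    (u : ℕ → X) (u' : ℕ → Y)
    (hu : ∀ m, TX.K (u m) = (q ^ (2*m) * lam) • u m)
    (hu' : ∀ m, TY.K (u' m) = (q ^ (2*m) * lam) • u' m)
    (hli : LinearIndependent k (fun p : ℕ × ℕ => (TX.E ^ p.2) (u p.1)))
    (hsp : Submodule.span k (Set.range fun p : ℕ × ℕ => (TX.E ^ p.2) (u p.1)) = ⊤)
    (hli' : LinearIndependent k (fun p : ℕ × ℕ => (TY.E ^ p.2) (u' p.1)))
    (hsp' : Submodule.span k (Set.range fun p : ℕ × ℕ => (TY.E ^ p.2) (u' p.1)) = ⊤) :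
    ∃ f : X ≃ₗ[k] Y, IsHom TX TY (f : X →ₗ[k] Y) := by
  let bX : Module.Basis (ℕ × ℕ) k X := Module.Basis.mk hli hsp.ge
  let bY : Module.Basis (ℕ × ℕ) k Y := Module.Basis.mk hli' hsp'.ge
  have hbX : ∀ p : ℕ × ℕ, bX p = (TX.E ^ p.2) (u p.1) := fun p => Module.Basis.mk_apply _ _ _
  have hbY : ∀ p : ℕ × ℕ, bY p = (TY.E ^ p.2) (u' p.1) := fun p => Module.Basis.mk_apply _ _ _
  have hKX : ∀ p : ℕ × ℕ, TX.K (bX p) = (q ^ (2*(p.1 + p.2)) * lam) • bX p := by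
    intro p
    rw [hbX, TX.K_pow, hu, map_smul, smul_smul, ← hbX]
    congr 1
    rw [mul_comm (q ^ (2*p.2)), mul_assoc, mul_comm lam, ← mul_assoc, ← pow_add]
    congr 2
    omega
  have hKY : ∀ p : ℕ × ℕ, TY.K (bY p) = (q ^ (2*(p.1 + p.2)) * lam) • bY p := by
    intro p
    rw [hbY, TY.K_pow, hu', map_smul, smul_smul, ← hbY]
    congr 1
    rw [mul_comm (q ^ (2*p.2)), mul_assoc, mul_comm lam, ← mul_assoc, ← pow_add]
    congr 2
    omega
  have hEX : ∀ p : ℕ × ℕ, TX.E (bX p) = bX (p.1, p.2 + 1) := by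
    intro p
    rw [hbX, hbX]
    exact pow_succ_apply' TX.E (u p.1) p.2
  have hEY : ∀ p : ℕ × ℕ, TY.E (bY p) = bY (p.1, p.2 + 1) := by
    intro p
    rw [hbY, hbY]
    exact pow_succ_apply' TY.E (u' p.1) p.2
  refine ⟨bX.equiv bY (Equiv.refl _), ?_, ?_⟩
  · apply bX.ext
    intro p
    simp only [LinearMap.coe_comp, Function.comp_apply, LinearEquiv.coe_coe]
    rw [hEX, Module.Basis.equiv_apply, Module.Basis.equiv_apply, Equiv.refl_apply,
      Equiv.refl_apply, hEY]
  · apply bX.ext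
    intro p
    simp only [LinearMap.coe_comp, Function.comp_apply, LinearEquiv.coe_coe]
    rw [hKX, map_smul, Module.Basis.equiv_apply, Equiv.refl_apply, hKY]

end Aux17

open TensorProduct in
/-- `M(σ) ⊗ M(σ') ≅ M(σ') ⊗ M(σ)` as 𝒰^{≥0}(𝔰𝔩₂)-modules. -/
theorem stmt17 {k : Type*} [Field k] (q : k) (hq0 : q ≠ 0)
    (hq : ∀ n : ℕ, 0 < n → q ^ n ≠ 1) (σ σ' : k) (hσ : σ ≠ 0) (hσ' : σ' ≠ 0)
    {V W : Type*} [AddCommGroup V] [Module k V] [AddCommGroup W] [Module k W]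
    (A : HalfQModule k q V) (v : V) (hA : IsVerma σ A v)
    (B : HalfQModule k q W) (w : W) (hB : IsVerma σ' B w)
    (T : HalfQModule k q (V ⊗[k] W)) (hT : IsTensorStruct A B T)
    (T' : HalfQModule k q (W ⊗[k] V)) (hT' : IsTensorStruct B A T') :
    ∃ f : (V ⊗[k] W) ≃ₗ[k] (W ⊗[k] V),
      IsHom T T' (f : (V ⊗[k] W) →ₗ[k] (W ⊗[k] V)) := by
  obtain ⟨hK1, hli1, hsp1⟩ := exists_std σ σ' A v hA B w hB T hT
  obtain ⟨hK2, hli2, hsp2⟩ := exists_std σ' σ B w hB A v hA T' hT'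
  simp only [mul_comm σ' σ] at hK2
  exact iso_of_std T T' (σ * σ') _ _ hK1 hK2 hli1 hsp1 hli2 hsp2
end
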